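/- arXiv:math/0311298 — 2 statements merged into one kernel-verified Lean document; each statement's English description precedes it below -/
import Mathlib

section
/- Let N ≥ 1 and n ≥ 0 be integers. Let R = ℤ[x_1, …, x_N] be the multivariate polynomial ring over ℤ, let Ω = Ω^1_{R/ℤ} be its module of Kähler differentials over ℤ, and let α = Σ_{i=1}^N x_i^n dx_i ∈ Ω. Then the complex 0 → R → Ω → ⋀²_R Ω → ⋯ → ⋀^N_R Ω → 0, whose differentials are left exterior multiplication by α, is exact at every spot except the last: (i) for f ∈ R, f·α = 0 implies f = 0, and (ii) for every p with 1 ≤ p ≤ N−1 and every ω ∈ ⋀^p_R Ω with α ∧ ω = 0, there exists β ∈ ⋀^{p−1}_R Ω with ω = α ∧ β. -/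
open MvPolynomial ExteriorAlgebra

section
variable {R : Type*} [CommRing R] {M : Type*} [AddCommGroup M] [Module R M]
variable {N : ℕ} (b : Module.Basis (Fin N) R M)

/-- Wedge of basis vectors indexed by a finite set, in increasing order. -/
noncomputable def wdg (S : Finset (Fin N)) : ExteriorAlgebra R M :=
  ιMulti R S.card (fun j => b (S.orderIsoOfFin rfl j))

@[simp] lemma wdg_empty : wdg b (∅ : Finset (Fin N)) = 1 := by
  exact ιMulti_zero_apply _

lemma ιMulti_eq_sgn_smul_wdg {p : ℕ} (f : Fin p → Fin N) (hf : Function.Injective f)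
    (S : Finset (Fin N)) (hS : S.card = p) (hfS : ∀ j, f j ∈ S) :
    ∃ ε : ℤˣ, ιMulti R p (fun j => b (f j)) = ε • wdg b S := by
  subst hS
  set e := S.orderIsoOfFin rfl with he
  have hg : Function.Injective (fun j => e.symm ⟨f j, hfS j⟩) := by
    intro i j hij
    apply hf
    have := congrArg (fun x => (e x : Fin N)) hij
    simpa using this
  let σ : Equiv.Perm (Fin S.card) := Equiv.ofBijective _
    ((Fintype.bijective_iff_injective_and_card _).2 ⟨hg, rfl⟩)
  refine ⟨Equiv.Perm.sign σ, ?_⟩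
  have hcomp : (fun j => b (f j)) = (fun j => b (e j : Fin N)) ∘ σ := by
    funext j
    simp only [Function.comp_apply, σ, Equiv.ofBijective_apply]
    congr 1
    have : e ((fun j => e.symm ⟨f j, hfS j⟩) j) = ⟨f j, hfS j⟩ := e.apply_symm_apply _
    simpa using congrArg Subtype.val this.symm
  rw [hcomp, AlternatingMap.map_perm]
  rfl
lemma ι_mul_wdg_eq_ιMulti (i : Fin N) (S : Finset (Fin N)) :
    ι R (b i) * wdg b S =
      ιMulti R (S.card + 1) (fun j => b ((Fin.cons i fun j => (S.orderIsoOfFin rfl j : Fin N) :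
        Fin (S.card + 1) → Fin N) j)) := by
  rw [ιMulti_succ_apply]
  simp only [Fin.cons_zero]
  rfl

lemma ι_mul_wdg_of_mem {i : Fin N} {S : Finset (Fin N)} (h : i ∈ S) :
    ι R (b i) * wdg b S = 0 := by
  rw [ι_mul_wdg_eq_ιMulti]
  obtain ⟨j, hj⟩ : ∃ j, (S.orderIsoOfFin rfl j : Fin N) = i := by
    obtain ⟨j, hj⟩ := (S.orderIsoOfFin rfl).surjective ⟨i, h⟩
    exact ⟨j, by simp [hj]⟩
  refine AlternatingMap.map_eq_zero_of_eq _ _ (i := 0) (j := j.succ) ?_ (by simp [Fin.ext_iff])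
  simp only [Fin.cons_zero, Fin.cons_succ]
  rw [← hj]

lemma ι_mul_wdg_of_not_mem {i : Fin N} {S : Finset (Fin N)} (h : i ∉ S) :
    ∃ ε : ℤˣ, ι R (b i) * wdg b S = ε • wdg b (insert i S) := by
  rw [ι_mul_wdg_eq_ιMulti]
  have hcard : (insert i S).card = S.card + 1 := Finset.card_insert_of_notMem h
  refine ιMulti_eq_sgn_smul_wdg b _ ?_ _ hcard ?_
  · refine (Fin.cons_injective_iff).2 ⟨?_, ?_⟩
    · rintro ⟨j, rfl⟩; exact h (by simp)
    · intro x y hxy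
      exact_mod_cast (S.orderIsoOfFin rfl).injective (Subtype.ext hxy)
  · intro j
    refine Fin.cases ?_ ?_ j
    · simp
    · intro j; simp [Finset.mem_insert]

noncomputable def coefA (T : Finset (Fin N)) (p : ℕ) : M [⋀^Fin p]→ₗ[R] R :=
  if h : T.card = p then
    (Matrix.detRowAlternating : (Fin p → R) [⋀^Fin p]→ₗ[R] R).compLinearMap
      (LinearMap.pi fun j : Fin p => b.coord (T.orderIsoOfFin h j : Fin N))
  else 0

noncomputable def coefF (T : Finset (Fin N)) : ExteriorAlgebra R M →ₗ[R] R :=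
  liftAlternating (coefA b T)

lemma coefF_wdg (T S : Finset (Fin N)) :
    coefF b T (wdg b S) = if T = S then 1 else 0 := by
  rw [coefF, wdg, liftAlternating_apply_ιMulti, coefA]
  by_cases h : T.card = S.card
  · rw [dif_pos h]
    by_cases hTS : T = S
    · subst hTS
      rw [if_pos rfl]
      have hm : Matrix.of (fun i j => (LinearMap.pi fun j : Fin T.card =>
          b.coord (T.orderIsoOfFin h j : Fin N)) (b (T.orderIsoOfFin rfl i : Fin N)) j) =
          (1 : Matrix (Fin T.card) (Fin T.card) R) := by
        ext i j
        simp only [Matrix.of_apply, LinearMap.pi_apply, Module.Basis.coord_apply, Module.Basis.repr_self,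
          Matrix.one_apply, Finsupp.single_apply]
        by_cases hij : i = j
        · subst hij
          simp
        · rw [if_neg, if_neg hij]
          intro hc
          exact hij ((T.orderIsoOfFin rfl).injective (Subtype.ext hc))
      -- value is det of that matrix
      show Matrix.detRowAlternating _ = 1
      rw [show (fun i => (LinearMap.pi fun j : Fin T.card =>
          b.coord (T.orderIsoOfFin h j : Fin N)) (b (T.orderIsoOfFin rfl i : Fin N))) =
          (1 : Matrix (Fin T.card) (Fin T.card) R) from hm]
      exact Matrix.det_one
    · rw [if_neg hTS]
      obtain ⟨s, hsS, hsT⟩ : ∃ s ∈ S, s ∉ T := by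
        by_contra hc
        push_neg at hc
        exact hTS (Finset.eq_of_subset_of_card_le hc h.le).symm
      obtain ⟨i, hi⟩ := (S.orderIsoOfFin rfl).surjective ⟨s, hsS⟩
      show Matrix.detRowAlternating _ = 0
      refine Matrix.det_eq_zero_of_row_eq_zero i fun j => ?_
      simp only [LinearMap.pi_apply, Module.Basis.coord_apply, Module.Basis.repr_self, Finsupp.single_apply]
      rw [if_neg]
      intro hc
      apply hsT
      rw [← show ((S.orderIsoOfFin rfl i : Fin N)) = s from congrArg Subtype.val hi, hc]
      exact (T.orderIsoOfFin h j).2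
  · rw [dif_neg h, if_neg]
    · rfl
    · rintro rfl; exact h rfl

noncomputable def sgn (i : Fin N) (S : Finset (Fin N)) : ℤˣ :=
  if h : i ∉ S then (ι_mul_wdg_of_not_mem b h).choose else 1

lemma sgn_spec {i : Fin N} {S : Finset (Fin N)} (h : i ∉ S) :
    ι R (b i) * wdg b S = ((sgn b i S : ℤ) : ℤ) • wdg b (insert i S) := by
  rw [sgn, dif_pos h]
  exact ((ι_mul_wdg_of_not_mem b h).choose_spec).trans (Units.smul_def _ _)

lemma coefF_linearCombination (T : Finset (Fin N)) (c : Finset (Fin N) →₀ R) :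
    coefF b T (Finsupp.linearCombination R (wdg b) c) = c T := by
  rw [Finsupp.linearCombination_apply, Finsupp.sum, map_sum]
  simp only [map_smul, coefF_wdg, smul_eq_mul, mul_ite, mul_one, mul_zero]
  rw [Finset.sum_ite_eq]
  split
  · rfl
  · exact (Finsupp.notMem_support_iff.1 (by assumption)).symm

lemma wdg_linearIndependent : LinearIndependent R (wdg b) := by
  rw [linearIndependent_iff]
  intro l hl
  ext T
  have h2 := congrArg (coefF b T) hl
  rwa [coefF_linearCombination, map_zero] at h2

/-- The submodule of the exterior algebra generated in degree 1 by the first `k`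
basis vectors. -/
noncomputable def Jk (k : ℕ) : Submodule R (ExteriorAlgebra R M) :=
  (Submodule.span R (b '' {i : Fin N | (i : ℕ) < k})).map (ι R)

/-- Degree-`p` part of the subalgebra generated by the first `k` basis vectors. -/
noncomputable def Wk (p k : ℕ) : Submodule R (ExteriorAlgebra R M) := Jk b k ^ p

def goodSets (p k : ℕ) : Set (Finset (Fin N)) := {S | S.card = p ∧ ∀ i ∈ S, (i : ℕ) < k}

lemma Jk_mono {k k' : ℕ} (h : k ≤ k') : Jk b k ≤ Jk b k' :=
  Submodule.map_mono (Submodule.span_mono (Set.image_mono fun i hi => lt_of_lt_of_le hi h))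

lemma Wk_mono {p k k' : ℕ} (h : k ≤ k') : Wk b p k ≤ Wk b p k' := by
  unfold Wk
  induction p with
  | zero => simp
  | succ p ih =>
    rw [pow_succ, pow_succ]
    exact mul_le_mul' ih (Jk_mono b h)

lemma ι_mem_Jk {k : ℕ} {m : M} (hm : m ∈ Submodule.span R (b '' {i : Fin N | (i : ℕ) < k})) :
    ι R m ∈ Jk b k := Submodule.mem_map_of_mem hm

lemma ιMulti_mem_pow (P : Submodule R M) (p : ℕ) (v : Fin p → M) (hv : ∀ j, v j ∈ P) :
    ιMulti R p v ∈ (P.map (ι R)) ^ p := by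
  induction p with
  | zero =>
    rw [ιMulti_zero_apply, pow_zero]
    exact Submodule.one_le.1 le_rfl
  | succ p ih =>
    rw [ιMulti_succ_apply, pow_succ']
    exact Submodule.mul_mem_mul (Submodule.mem_map_of_mem (hv 0))
      (ih _ fun j => hv j.succ)

lemma wdg_mem_Wk {p k : ℕ} {S : Finset (Fin N)} (hS : S ∈ goodSets p k) :
    wdg b S ∈ Wk b p k := by
  obtain ⟨hcard, hlt⟩ := hS
  subst hcard
  rw [wdg, Wk]
  refine ιMulti_mem_pow _ _ _ fun j => Submodule.subset_span ?_
  exact ⟨_, hlt _ (S.orderIsoOfFin rfl j).2, rfl⟩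

lemma Wk_le_span (p k : ℕ) :
    Wk b p k ≤ Submodule.span R (wdg b '' goodSets p k) := by
  intro x hx
  refine Submodule.pow_induction_on_left' (M := Jk b k)
    (C := fun n y _ => y ∈ Submodule.span R (wdg b '' goodSets n k)) ?_ ?_ ?_ hx
  · intro r
    rw [Algebra.algebraMap_eq_smul_one, ← wdg_empty b]
    exact Submodule.smul_mem _ _ (Submodule.subset_span ⟨∅, ⟨rfl, by simp⟩, rfl⟩)
  · intro x y i _ _ hx hy
    exact Submodule.add_mem _ hx hy
  · rintro m ⟨m', hm', rfl⟩ i x _ hx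
    -- reduce to x = wdg S by span induction
    refine Submodule.span_induction ?_ ?_ ?_ ?_ hx
    · rintro _ ⟨S, hS, rfl⟩
      -- expand m' over basis elements with index < k
      refine Submodule.span_induction ?_ ?_ ?_ ?_ hm'
      · rintro _ ⟨j, hj, rfl⟩
        by_cases hjS : j ∈ S
        · rw [ι_mul_wdg_of_mem b hjS]
          exact Submodule.zero_mem _
        · rw [sgn_spec b hjS]
          refine Submodule.smul_of_tower_mem _ _ (Submodule.subset_span ⟨insert j S, ⟨?_, ?_⟩, rfl⟩)
          · rw [Finset.card_insert_of_notMem hjS, hS.1]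
          · intro i hi
            rcases Finset.mem_insert.1 hi with rfl | hi
            · exact hj
            · exact hS.2 i hi
      · simp only [map_zero, zero_mul]
        exact Submodule.zero_mem _
      · intro u v _ _ hu hv
        simp only [map_add, add_mul]
        exact Submodule.add_mem _ hu hv
      · intro r u _ hu
        simp only [map_smul, smul_mul_assoc]
        exact Submodule.smul_mem _ _ hu
    · simp only [mul_zero]
      exact Submodule.zero_mem _
    · intro u v _ _ hu hv
      rw [mul_add]
      exact Submodule.add_mem _ hu hv
    · intro r u _ hu
      rw [mul_smul_comm]
      exact Submodule.smul_mem _ _ hu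

lemma Wk_rep {p k : ℕ} {x : ExteriorAlgebra R M} (hx : x ∈ Wk b p k) :
    ∃ c ∈ Finsupp.supported R R (goodSets p k),
      Finsupp.linearCombination R (wdg b) c = x := by
  have h2 := Wk_le_span b p k hx
  rwa [Finsupp.mem_span_image_iff_linearCombination] at h2

/-- The effect of multiplying by `ι (b κ)` on coefficient finsupps. -/
noncomputable def insMap (κ : Fin N) (c : Finset (Fin N) →₀ R) : Finset (Fin N) →₀ R :=
  c.sum fun S r => if κ ∈ S then 0 else
    Finsupp.single (insert κ S) (((sgn b κ S : ℤ) : R) * r)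

lemma ι_mul_linearCombination (κ : Fin N) (c : Finset (Fin N) →₀ R) :
    ι R (b κ) * Finsupp.linearCombination R (wdg b) c =
      Finsupp.linearCombination R (wdg b) (insMap b κ c) := by
  rw [insMap, Finsupp.linearCombination_apply, Finsupp.sum, Finset.mul_sum,
    Finsupp.sum, map_sum]
  refine Finset.sum_congr rfl fun S _ => ?_
  by_cases hκ : κ ∈ S
  · rw [if_pos hκ, map_zero, mul_smul_comm, ι_mul_wdg_of_mem b hκ, smul_zero]
  · rw [if_neg hκ, Finsupp.linearCombination_single, mul_smul_comm, sgn_spec b hκ,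
      mul_smul, Int.cast_smul_eq_zsmul, smul_comm]

lemma insMap_apply_not_mem {κ : Fin N} {T : Finset (Fin N)} (hT : κ ∉ T)
    (c : Finset (Fin N) →₀ R) : insMap b κ c T = 0 := by
  rw [insMap, Finsupp.sum_apply, Finsupp.sum]
  refine Finset.sum_eq_zero fun S _ => ?_
  by_cases hκ : κ ∈ S
  · rw [if_pos hκ, Finsupp.coe_zero, Pi.zero_apply]
  · rw [if_neg hκ, Finsupp.single_apply, if_neg]
    intro hc
    exact hT (hc ▸ Finset.mem_insert_self κ S)

lemma insMap_apply_insert {κ : Fin N} {S₀ : Finset (Fin N)} (h0 : κ ∉ S₀)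
    (c : Finset (Fin N) →₀ R) (hsupp : ∀ S ∈ c.support, κ ∉ S) :
    insMap b κ c (insert κ S₀) = ((sgn b κ S₀ : ℤ) : R) * c S₀ := by
  rw [insMap, Finsupp.sum_apply, Finsupp.sum]
  have : ∀ S ∈ c.support,
      (if κ ∈ S then (0 : Finset (Fin N) →₀ R) else
        Finsupp.single (insert κ S) (((sgn b κ S : ℤ) : R) * c S)) (insert κ S₀) =
      if S = S₀ then ((sgn b κ S : ℤ) : R) * c S else 0 := by
    intro S hS
    rw [if_neg (hsupp S hS), Finsupp.single_apply]
    congr 1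
    simp only [eq_iff_iff]
    constructor
    · intro h
      have := congrArg (Finset.erase · κ) h
      simpa [Finset.erase_insert (hsupp S hS), Finset.erase_insert h0] using this
    · rintro rfl; rfl
  rw [Finset.sum_congr rfl this, Finset.sum_ite_eq' c.support S₀
    fun S => ((sgn b κ S : ℤ) : R) * c S]
  split
  · rfl
  · rw [Finsupp.notMem_support_iff.1 (by assumption), mul_zero]

lemma zero_extraction {q p k : ℕ} (hk : k < N) {x z : ExteriorAlgebra R M}
    (hx : x ∈ Wk b q k) (hz : z ∈ Wk b p k)
    (h : x + ι R (b ⟨k, hk⟩) * z = 0) : x = 0 ∧ z = 0 := by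
  obtain ⟨c, hc, rfl⟩ := Wk_rep b hx
  obtain ⟨c', hc', rfl⟩ := Wk_rep b hz
  set κ : Fin N := ⟨k, hk⟩
  rw [ι_mul_linearCombination, ← map_add] at h
  have hcomb : c + insMap b κ c' = 0 :=
    linearIndependent_iff.1 (wdg_linearIndependent b) _ h
  have hκc : ∀ T ∈ c.support, κ ∉ T := by
    intro T hT hκT
    exact absurd ((hc hT).2 κ hκT) (lt_irrefl k)
  have hκc' : ∀ S ∈ c'.support, κ ∉ S := by
    intro S hS hκS
    exact absurd ((hc' hS).2 κ hκS) (lt_irrefl k)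
  have hc0 : c = 0 := by
    ext T
    by_cases hT : T ∈ c.support
    · have := congrArg (fun f => f T) hcomb
      simpa [insMap_apply_not_mem b (hκc T hT) c'] using this
    · exact Finsupp.notMem_support_iff.1 hT
  have hins : insMap b κ c' = 0 := by
    rw [hc0, zero_add] at hcomb; exact hcomb
  have hc'0 : c' = 0 := by
    ext S₀
    by_cases hS₀ : S₀ ∈ c'.support
    · have h2 : ((sgn b κ S₀ : ℤ) : R) * c' S₀ = 0 := by
        rw [← insMap_apply_insert b (hκc' S₀ hS₀) c' hκc', hins, Finsupp.coe_zero,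
          Pi.zero_apply]
      rcases Int.units_eq_one_or (sgn b κ S₀) with hε | hε <;> rw [hε] at h2 <;>
        simpa using h2
    · exact Finsupp.notMem_support_iff.1 hS₀
  rw [hc0, hc'0]
  simp

def Fk (k : ℕ) (hk : k ≤ N) : Finset (Fin N) :=
  (Finset.range k).attachFin fun m hm => lt_of_lt_of_le (Finset.mem_range.1 hm) hk

lemma mem_Fk {k : ℕ} {hk : k ≤ N} {i : Fin N} : i ∈ Fk k hk ↔ (i : ℕ) < k := by
  rw [Fk, Finset.mem_attachFin, Finset.mem_range]

lemma card_Fk {k : ℕ} (hk : k ≤ N) : (Fk k hk).card = k := by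
  rw [Fk, Finset.card_attachFin, Finset.card_range]

variable (a : Fin N → R)

/-- The element `∑_{i < k} a i • b i`. -/
noncomputable def alk (k : ℕ) (hk : k ≤ N) : M := ∑ i ∈ Fk k hk, a i • b i

lemma alk_mem (k : ℕ) (hk : k ≤ N) :
    alk b a k hk ∈ Submodule.span R (b '' {i : Fin N | (i : ℕ) < k}) := by
  refine Submodule.sum_mem _ fun i hi => Submodule.smul_mem _ _ ?_
  exact Submodule.subset_span ⟨i, mem_Fk.1 hi, rfl⟩

lemma ι_alk_mul_mem {p k : ℕ} (hk : k ≤ N) {x : ExteriorAlgebra R M} (hx : x ∈ Wk b p k) :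
    ι R (alk b a k hk) * x ∈ Wk b (p + 1) k := by
  rw [Wk, pow_succ']
  exact Submodule.mul_mem_mul (ι_mem_Jk b (alk_mem b a k hk)) hx

lemma ι_alk_mul_eq_sum (k : ℕ) (hk : k ≤ N) (z : ExteriorAlgebra R M) :
    ι R (alk b a k hk) * z = ∑ i ∈ Fk k hk, a i • (ι R (b i) * z) := by
  rw [alk, map_sum, Finset.sum_mul]
  refine Finset.sum_congr rfl fun i _ => ?_
  rw [map_smul, smul_mul_assoc]

lemma ι_alk_mul_wdg_Fk (k : ℕ) (hk : k ≤ N) :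
    ι R (alk b a k hk) * wdg b (Fk k hk) = 0 := by
  rw [ι_alk_mul_eq_sum]
  refine Finset.sum_eq_zero fun i hi => ?_
  rw [ι_mul_wdg_of_mem b hi, smul_zero]

lemma top_rep {k : ℕ} (hk : k ≤ N) {x : ExteriorAlgebra R M} (hx : x ∈ Wk b k k) :
    ∃ c : R, x = c • wdg b (Fk k hk) := by
  obtain ⟨c, hc, rfl⟩ := Wk_rep b hx
  have hsub : c.support ⊆ {Fk k hk} := by
    intro T hT
    obtain ⟨hcard, hlt⟩ := hc hT
    rw [Finset.mem_singleton]
    refine Finset.eq_of_subset_of_card_le (fun i hi => mem_Fk.2 (hlt i hi))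
      (le_of_eq (by rw [card_Fk hk, hcard]))
  refine ⟨c (Fk k hk), ?_⟩
  rw [Finsupp.linearCombination_apply, Finsupp.sum]
  rcases Finset.subset_singleton_iff.mp hsub with h | h
  · rw [h, Finset.sum_empty, Finsupp.notMem_support_iff.1 (by rw [h]; simp), zero_smul]
  · rw [h, Finset.sum_singleton]

lemma coefF_smul_wdg_Fk {k : ℕ} (hk : k ≤ N) (c : R) :
    coefF b (Fk k hk) (c • wdg b (Fk k hk)) = c := by
  rw [map_smul, coefF_wdg, if_pos rfl, smul_eq_mul, mul_one]

lemma coefF_ι_alk_mul_mem_ideal (k : ℕ) (hk : k ≤ N) (z : ExteriorAlgebra R M) :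
    coefF b (Fk k hk) (ι R (alk b a k hk) * z) ∈
      Ideal.span (a '' {i : Fin N | (i : ℕ) < k}) := by
  rw [ι_alk_mul_eq_sum, map_sum]
  refine Ideal.sum_mem _ fun i hi => ?_
  rw [map_smul, smul_eq_mul]
  exact Ideal.mul_mem_right _ _ (Ideal.subset_span ⟨i, mem_Fk.1 hi, rfl⟩)

lemma top_reconstruct {k : ℕ} (hk : k ≤ N) (l : Fin N →₀ R)
    (hl : ↑l.support ⊆ {i : Fin N | (i : ℕ) < k}) :
    ∃ γ ∈ Wk b (k - 1) k,
      ι R (alk b a k hk) * γ = (l.sum fun i r => r * a i) • wdg b (Fk k hk) := by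
  classical
  refine ⟨l.sum fun i r =>
    r • ((((sgn b i ((Fk k hk).erase i))⁻¹ : ℤˣ) : ℤ) • wdg b ((Fk k hk).erase i)), ?_, ?_⟩
  · refine Submodule.sum_mem _ fun i hi => ?_
    refine Submodule.smul_mem _ _ (Submodule.smul_of_tower_mem _ _ (wdg_mem_Wk b ?_))
    constructor
    · rw [Finset.card_erase_of_mem (mem_Fk.2 (hl hi)), card_Fk hk]
    · intro j hj
      exact mem_Fk.1 (Finset.mem_of_mem_erase hj)
  · rw [Finsupp.sum, Finset.mul_sum, Finsupp.sum, Finset.sum_smul]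
    refine Finset.sum_congr rfl fun i hi => ?_
    have hiFk : i ∈ Fk k hk := mem_Fk.2 (hl hi)
    have hine : i ∉ (Fk k hk).erase i := Finset.notMem_erase i _
    rw [mul_smul_comm, mul_smul_comm, ι_alk_mul_eq_sum]
    have hsum : ∑ j ∈ Fk k hk, a j • (ι R (b j) * wdg b ((Fk k hk).erase i)) =
        a i • (ι R (b i) * wdg b ((Fk k hk).erase i)) := by
      refine Finset.sum_eq_single_of_mem i hiFk fun j hj hji => ?_
      rw [ι_mul_wdg_of_mem b (Finset.mem_erase.2 ⟨hji, hj⟩), smul_zero]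
    rw [hsum, sgn_spec b hine, Finset.insert_erase hiFk, smul_comm ((((sgn b i
      ((Fk k hk).erase i))⁻¹ : ℤˣ) : ℤ)) (a i), smul_smul ((((sgn b i
      ((Fk k hk).erase i))⁻¹ : ℤˣ) : ℤ)), ← Units.val_mul, inv_mul_cancel, Units.val_one,
      one_smul, smul_smul]

lemma decompose {p k : ℕ} (hk : k < N) {x : ExteriorAlgebra R M} (hx : x ∈ Wk b p (k + 1)) :
    ∃ y ∈ Wk b p k, ∃ z ∈ Wk b (p - 1) k, x = y + ι R (b ⟨k, hk⟩) * z := by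
  have hx' := Wk_le_span b p (k + 1) hx
  refine Submodule.span_induction ?_ ?_ ?_ ?_ hx'
  · rintro _ ⟨S, hS, rfl⟩
    set κ : Fin N := ⟨k, hk⟩ with hκ
    by_cases hκS : κ ∈ S
    · have hner : κ ∉ S.erase κ := Finset.notMem_erase _ _
      have hmem : S.erase κ ∈ goodSets (p - 1) k := by
        constructor
        · rw [Finset.card_erase_of_mem hκS, hS.1]
        · intro i hi
          have h1 := hS.2 i (Finset.mem_of_mem_erase hi)
          have h2 : i ≠ κ := Finset.ne_of_mem_erase hi
          have h3 : (i : ℕ) ≠ k := fun hc => h2 (Fin.ext hc)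
          omega
      refine ⟨0, Submodule.zero_mem _,
        (((sgn b κ (S.erase κ))⁻¹ : ℤˣ) : ℤ) • wdg b (S.erase κ),
        Submodule.smul_of_tower_mem _ _ (wdg_mem_Wk b hmem), ?_⟩
      rw [zero_add, mul_smul_comm, sgn_spec b hner, Finset.insert_erase hκS,
        smul_smul, ← Units.val_mul, inv_mul_cancel, Units.val_one, one_smul]
    · have hmem : S ∈ goodSets p k := by
        refine ⟨hS.1, fun i hi => ?_⟩
        have h1 := hS.2 i hi
        have h3 : (i : ℕ) ≠ k := fun hc => hκS (by rwa [show i = κ from Fin.ext hc] at hi)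
        omega
      exact ⟨wdg b S, wdg_mem_Wk b hmem, 0, Submodule.zero_mem _, by rw [mul_zero, add_zero]⟩
  · exact ⟨0, Submodule.zero_mem _, 0, Submodule.zero_mem _, by rw [mul_zero, add_zero]⟩
  · rintro u v _ _ ⟨y, hy, z, hz, rfl⟩ ⟨y', hy', z', hz', rfl⟩
    exact ⟨y + y', Submodule.add_mem _ hy hy', z + z', Submodule.add_mem _ hz hz', by rw [mul_add]; abel⟩
  · rintro r u _ ⟨y, hy, z, hz, rfl⟩
    exact ⟨r • y, Submodule.smul_mem _ _ hy, r • z, Submodule.smul_mem _ _ hz, by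
      rw [smul_add, mul_smul_comm]⟩

lemma repr_alk {k : ℕ} (hk : k ≤ N) (i : Fin N) :
    b.repr (alk b a k hk) i = if i ∈ Fk k hk then a i else 0 := by
  rw [alk, map_sum, Finsupp.finset_sum_apply]
  simp only [map_smul, Module.Basis.repr_self, Finsupp.smul_single, smul_eq_mul, mul_one,
    Finsupp.single_apply]
  rw [Finset.sum_ite_eq' (Fk k hk) i a]

lemma Zlem {k : ℕ} (hk1 : 1 ≤ k) (hk : k ≤ N)
    (hdom : ∀ (i : Fin N) (f : R), f * a i = 0 → f = 0)
    {x : ExteriorAlgebra R M} (hx : x ∈ Wk b 0 k)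
    (h : ι R (alk b a k hk) * x = 0) : x = 0 := by
  rw [Wk, pow_zero] at hx
  obtain ⟨r, rfl⟩ := Submodule.mem_one.1 hx
  rw [Algebra.algebraMap_eq_smul_one, mul_smul_comm, mul_one, ← map_smul,
    ι_eq_zero_iff] at h
  have h0 := congrArg (fun m => b.repr m ⟨0, lt_of_lt_of_le hk1 hk⟩) h
  simp only [map_smul, Finsupp.smul_apply, smul_eq_mul, map_zero, Finsupp.coe_zero,
    Pi.zero_apply] at h0
  rw [repr_alk b a hk, if_pos (mem_Fk.2 hk1)] at h0
  rw [hdom _ _ h0, Algebra.algebraMap_eq_smul_one, zero_smul]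

lemma koszul_main
    (hdom : ∀ (i : Fin N) (f : R), f * a i = 0 → f = 0)
    (hreg : ∀ (κ : Fin N) (c : R),
      a κ * c ∈ Ideal.span (a '' {j : Fin N | (j : ℕ) < (κ : ℕ)}) →
      c ∈ Ideal.span (a '' {j : Fin N | (j : ℕ) < (κ : ℕ)})) :
    ∀ (k : ℕ) (hk : k ≤ N) (p : ℕ), 1 ≤ p → p ≤ k - 1 →
      ∀ x ∈ Wk b p k, ι R (alk b a k hk) * x = 0 →
        ∃ β ∈ Wk b (p - 1) k, x = ι R (alk b a k hk) * β := by
  intro k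
  induction k with
  | zero => intro hk p hp1 hpk; omega
  | succ k ih =>
    intro hk1 p hp1 hpk x hx hαx
    have hkN : k ≤ N := Nat.le_of_succ_le hk1
    have hklt : k < N := hk1
    set κ : Fin N := ⟨k, hklt⟩ with hκdef
    have hFk_succ : Fk (k + 1) hk1 = insert κ (Fk k hkN) := by
      ext i
      simp only [mem_Fk, Finset.mem_insert]
      constructor
      · intro h
        rcases Nat.lt_succ_iff_lt_or_eq.1 h with h | h
        · exact Or.inr h
        · exact Or.inl (Fin.ext h)
      · rintro (rfl | h)
        · exact Nat.lt_succ_self k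
        · exact Nat.lt_succ_of_lt h
    have hκFk : κ ∉ Fk k hkN := by simp [mem_Fk, hκdef]
    have halk : alk b a (k + 1) hk1 = alk b a k hkN + a κ • b κ := by
      rw [alk, alk, hFk_succ, Finset.sum_insert hκFk, add_comm]
    obtain ⟨y, hy, z, hz, rfl⟩ := decompose b hklt hx
    have hanti : ∀ (m m' : M) (w : ExteriorAlgebra R M),
        ι R m * (ι R m' * w) = -(ι R m' * (ι R m * w)) := by
      intro m m' w
      rw [← mul_assoc, ← mul_assoc, eq_neg_of_add_eq_zero_left (ι_add_mul_swap m m'), neg_mul]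
    have hsq : ∀ w : ExteriorAlgebra R M, ι R (b κ) * (ι R (b κ) * w) = 0 := by
      intro w
      rw [← mul_assoc, ι_sq_zero, zero_mul]
    have hexp : ι R (alk b a (k + 1) hk1) * (y + ι R (b κ) * z) =
        ι R (alk b a k hkN) * y +
          ι R (b κ) * (a κ • y - ι R (alk b a k hkN) * z) := by
      have h1 : ι R (alk b a k hkN) * (ι R (b κ) * z) =
          -(ι R (b κ) * (ι R (alk b a k hkN) * z)) := hanti _ _ _
      rw [halk, map_add, map_smul, add_mul, mul_add, mul_add, h1, smul_mul_assoc,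
        smul_mul_assoc, hsq, smul_zero, mul_sub, mul_smul_comm]
      abel
    rw [hexp] at hαx
    have hz' : a κ • y - ι R (alk b a k hkN) * z ∈ Wk b p k := by
      refine Submodule.sub_mem _ (Submodule.smul_mem _ _ hy) ?_
      have h3 := ι_alk_mul_mem b a hkN hz
      rwa [show p - 1 + 1 = p from by omega] at h3
    have hy' : ι R (alk b a k hkN) * y ∈ Wk b (p + 1) k := ι_alk_mul_mem b a hkN hy
    obtain ⟨h1, h2⟩ := zero_extraction b hklt hy' hz' hαx
    have h2' : a κ • y = ι R (alk b a k hkN) * z := sub_eq_zero.1 h2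
    have hγ : ∃ γ ∈ Wk b (p - 1) k, y = ι R (alk b a k hkN) * γ := by
      by_cases hpk' : p ≤ k - 1
      · exact ih hkN p hp1 hpk' y hy h1
      · have hpk2 : p = k := by omega
        subst hpk2
        obtain ⟨c, rfl⟩ := top_rep b hkN hy
        have hcoef := congrArg (coefF b (Fk p hkN)) h2'
        rw [smul_smul, coefF_smul_wdg_Fk b hkN] at hcoef
        have hideal : a κ * c ∈ Ideal.span (a '' {j : Fin N | (j : ℕ) < p}) := by
          rw [hcoef]
          exact coefF_ι_alk_mul_mem_ideal b a p hkN z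
        have hc : c ∈ Ideal.span (a '' {j : Fin N | (j : ℕ) < p}) := hreg κ c hideal
        rw [Ideal.span, Finsupp.mem_span_image_iff_linearCombination] at hc
        obtain ⟨l, hl, hlc⟩ := hc
        obtain ⟨γ, hγm, hγe⟩ := top_reconstruct b a hkN l hl
        refine ⟨γ, hγm, ?_⟩
        rw [hγe]
        congr 1
        rw [← hlc, Finsupp.linearCombination_apply]
        rfl
    obtain ⟨γ, hγm, hyγ⟩ := hγ
    have hη : ι R (alk b a k hkN) * (z - a κ • γ) = 0 := by
      rw [mul_sub, mul_smul_comm, ← hyγ, ← h2', sub_self]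
    have hηm : z - a κ • γ ∈ Wk b (p - 1) k :=
      Submodule.sub_mem _ hz (Submodule.smul_mem _ _ hγm)
    have hδ : ∃ δ, z = a κ • γ + ι R (alk b a k hkN) * δ ∧
        ι R (b κ) * δ ∈ Wk b (p - 1) (k + 1) := by
      by_cases hp2 : 2 ≤ p
      · obtain ⟨δ, hδm, hδe⟩ := ih hkN (p - 1) (by omega) (by omega) _ hηm hη
        refine ⟨δ, by rw [← hδe]; abel, ?_⟩
        have h4 : ι R (b κ) * δ ∈ Wk b ((p - 1 - 1) + 1) (k + 1) := by
          rw [Wk, pow_succ']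
          exact Submodule.mul_mem_mul
            (Submodule.mem_map_of_mem (Submodule.subset_span ⟨κ, Nat.lt_succ_self k, rfl⟩))
            (Wk_mono b (Nat.le_succ k) hδm)
        rwa [show p - 1 - 1 + 1 = p - 1 by omega] at h4
      · have hp1' : p = 1 := by omega
        have hz0 : z - a κ • γ = 0 := by
          refine Zlem b a (by omega) hkN hdom ?_ hη
          rwa [hp1', Nat.sub_self] at hηm
        refine ⟨0, ?_, by rw [mul_zero]; exact Submodule.zero_mem _⟩
        rw [mul_zero, add_zero, ← sub_eq_zero, hz0]
    obtain ⟨δ, hδe, hδm⟩ := hδ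
    refine ⟨γ - ι R (b κ) * δ, ?_, ?_⟩
    · exact Submodule.sub_mem _ (Wk_mono b (Nat.le_succ k) hγm) hδm
    · have hιδ : ι R (alk b a k hkN) * (ι R (b κ) * δ) =
          -(ι R (b κ) * (ι R (alk b a k hkN) * δ)) := hanti _ _ _
      simp only [halk, map_add, map_smul, hδe, hyγ, mul_sub, add_mul, mul_add,
        smul_mul_assoc, mul_smul_comm, hιδ, hsq, smul_zero]
      abel

end
section Application
open MvPolynomial

variable {N n : ℕ}

lemma mv_hreg (hn : (n : ℕ) = n) (κ : Fin N) (c : MvPolynomial (Fin N) ℤ)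
    (hc : (fun i : Fin N => (X i : MvPolynomial (Fin N) ℤ) ^ n) κ * c ∈
      Ideal.span ((fun i : Fin N => (X i : MvPolynomial (Fin N) ℤ) ^ n) ''
        {j : Fin N | (j : ℕ) < (κ : ℕ)})) :
    c ∈ Ideal.span ((fun i : Fin N => (X i : MvPolynomial (Fin N) ℤ) ^ n) ''
        {j : Fin N | (j : ℕ) < (κ : ℕ)}) := by
  classical
  have himg : ∀ s : Set (Fin N),
      (fun i : Fin N => (X i : MvPolynomial (Fin N) ℤ) ^ n) '' s =
        (fun m => monomial m (1 : ℤ)) '' ((fun i : Fin N => Finsupp.single i n) '' s) := by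
    intro s
    rw [Set.image_image]
    exact Set.image_congr fun i _ => X_pow_eq_monomial
  rw [himg] at hc ⊢
  rw [mem_ideal_span_monomial_image] at hc ⊢
  intro m hm
  have hmul : (X κ : MvPolynomial (Fin N) ℤ) ^ n * c =
      monomial (Finsupp.single κ n) (1 : ℤ) * c := by rw [X_pow_eq_monomial]
  have hm' : Finsupp.single κ n + m ∈ ((fun i : Fin N =>
      (X i : MvPolynomial (Fin N) ℤ) ^ n) κ * c).support := by
    simp only [hmul]
    rw [mem_support_iff, coeff_monomial_mul, one_mul]
    exact mem_support_iff.1 hm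
  obtain ⟨m', ⟨j, hj, rfl⟩, hle⟩ := hc _ hm'
  refine ⟨Finsupp.single j n, ⟨j, hj, rfl⟩, ?_⟩
  have hjκ : j ≠ κ := fun h => by rw [h] at hj; exact Nat.lt_irrefl _ hj
  rw [Finsupp.single_le_iff] at hle ⊢
  rwa [Finsupp.add_apply, Finsupp.single_apply, if_neg (fun h => hjκ h.symm), zero_add] at hle

end Application


set_option maxHeartbeats 1000000 in
set_option synthInstance.maxHeartbeats 400000 in
/-- For `R = ℤ[x₁,…,x_N]` (`N ≥ 1`, `n ≥ 0`),
`Ω = Ω¹_{R/ℤ}` and `α = ∑ᵢ xᵢⁿ dxᵢ ∈ Ω`, the Koszul-type complex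
`0 → R → Ω → ⋀² Ω → ⋯ → ⋀^N Ω → 0` whose differentials are left exterior
multiplication by `α` is exact at every spot except the last:
(i) `f • α = 0` implies `f = 0`, and (ii) for `1 ≤ p ≤ N - 1` and
`ω ∈ ⋀^p Ω` with `α ∧ ω = 0` there is `β ∈ ⋀^(p-1) Ω` with `ω = α ∧ β`. -/
theorem stmt_0 (N n : ℕ) (hN : 1 ≤ N)
    (α : Ω[MvPolynomial (Fin N) ℤ⁄ℤ])
    (hα : α = ∑ i : Fin N,
      (X i : MvPolynomial (Fin N) ℤ) ^ n •
        (KaehlerDifferential.D ℤ (MvPolynomial (Fin N) ℤ)) (X i)) :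
    (∀ f : MvPolynomial (Fin N) ℤ, f • α = 0 → f = 0) ∧
    (∀ p : ℕ, 1 ≤ p → p ≤ N - 1 →
      ∀ ω : ⋀[MvPolynomial (Fin N) ℤ]^p (Ω[MvPolynomial (Fin N) ℤ⁄ℤ]),
        ExteriorAlgebra.ι (MvPolynomial (Fin N) ℤ) α * (ω :
            ExteriorAlgebra (MvPolynomial (Fin N) ℤ) (Ω[MvPolynomial (Fin N) ℤ⁄ℤ])) = 0 →
        ∃ β ∈ ⋀[MvPolynomial (Fin N) ℤ]^(p - 1) (Ω[MvPolynomial (Fin N) ℤ⁄ℤ]),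
          (ω : ExteriorAlgebra (MvPolynomial (Fin N) ℤ) (Ω[MvPolynomial (Fin N) ℤ⁄ℤ])) =
            ExteriorAlgebra.ι (MvPolynomial (Fin N) ℤ) α * β) := by
  classical
  set b := KaehlerDifferential.mvPolynomialBasis ℤ (Fin N) with hbdef
  set a : Fin N → MvPolynomial (Fin N) ℤ := fun i => (X i : MvPolynomial (Fin N) ℤ) ^ n
    with hadef
  have hb : ∀ i, b i = KaehlerDifferential.D ℤ (MvPolynomial (Fin N) ℤ) (X i) := by
    intro i
    apply b.repr.injective
    rw [Module.Basis.repr_self, hbdef, KaehlerDifferential.mvPolynomialBasis_repr_D_X]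
  have hN0 : 0 < N := hN
  have hFkN : Fk (N := N) N (le_refl N) = Finset.univ := by
    ext i
    simp [mem_Fk, i.isLt]
  have hαalk : α = alk b a N (le_refl N) := by
    rw [hα, alk, hFkN]
    exact (Finset.sum_congr rfl fun i _ => by rw [hb]).symm
  have hdom : ∀ (i : Fin N) (f : MvPolynomial (Fin N) ℤ), f * a i = 0 → f = 0 := by
    intro i f hf
    rcases mul_eq_zero.1 hf with h | h
    · exact h
    · exact absurd h (pow_ne_zero _ (X_ne_zero i))
  have hreg : ∀ (κ : Fin N) (c : MvPolynomial (Fin N) ℤ),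
      a κ * c ∈ Ideal.span (a '' {j : Fin N | (j : ℕ) < (κ : ℕ)}) →
      c ∈ Ideal.span (a '' {j : Fin N | (j : ℕ) < (κ : ℕ)}) :=
    fun κ c hc => mv_hreg rfl κ c hc
  have hJtop : Jk b N = LinearMap.range (ι (MvPolynomial (Fin N) ℤ)) := by
    rw [Jk, show {i : Fin N | (i : ℕ) < N} = Set.univ from
      Set.eq_univ_of_forall fun i => i.isLt, Set.image_univ, b.span_eq, Submodule.map_top]
  have hWk : ∀ p : ℕ, Wk b p N = ⋀[MvPolynomial (Fin N) ℤ]^p (Ω[MvPolynomial (Fin N) ℤ⁄ℤ]) := by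
    intro p
    rw [Wk, hJtop]
  constructor
  · intro f hf
    have h0 := congrArg (fun m => b.repr m ⟨0, hN0⟩) hf
    simp only [map_smul, Finsupp.smul_apply, smul_eq_mul, map_zero, Finsupp.coe_zero,
      Pi.zero_apply] at h0
    rw [hαalk, repr_alk b a (le_refl N), if_pos (mem_Fk.2 hN0)] at h0
    exact hdom _ _ h0
  · intro p hp1 hpN ω hω
    obtain ⟨β, hβ, hβe⟩ := koszul_main b a hdom hreg N (le_refl N) p hp1 hpN (ω :
        ExteriorAlgebra (MvPolynomial (Fin N) ℤ) (Ω[MvPolynomial (Fin N) ℤ⁄ℤ]))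
      (by rw [hWk]; exact ω.2) (by rw [← hαalk]; exact hω)
    refine ⟨β, ?_, ?_⟩
    · rw [← hWk]; exact hβ
    · rw [hαalk]; exact hβe
end

section
/- Let N ≥ 1 and n ≥ 0 be integers. In the module of Kähler differentials Ω^1_{R/ℤ} of R = ℤ[x_1, …, x_N] over ℤ, the following identity holds: Σ_{i=1}^N x_i^n dx_i = Σ_{j=1}^N (−1)^{j−1} h_{n+1−j} · d e_j, where e_j is the j-th elementary symmetric polynomial in x_1, …, x_N, h_m is the complete homogeneous symmetric polynomial of degree m in x_1, …, x_N (the sum of all monomials of total degree m), h_0 = 1, and h_m = 0 for m < 0. -/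
open MvPolynomial Finset

set_option linter.unusedSectionVars false

namespace Stmt4

variable {σ : Type*} [Fintype σ] [DecidableEq σ] {R : Type*} [CommRing R]

/-- indicator finsupp of a finset -/
noncomputable def chi (t : Finset σ) : σ →₀ ℕ := ∑ a ∈ t, Finsupp.single a 1

lemma chi_def (t : Finset σ) : chi t = ∑ a ∈ t, Finsupp.single a 1 := rfl

lemma chi_apply (t : Finset σ) (a : σ) : chi t a = if a ∈ t then 1 else 0 := by
  classical
  simp [chi, Finset.sum_apply', Finsupp.single_apply, Finset.sum_ite_eq]

lemma chi_le_iff {t : Finset σ} {e : σ →₀ ℕ} : chi t ≤ e ↔ t ⊆ e.support := by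
  constructor
  · intro h a ha
    have := h a
    rw [chi_apply, if_pos ha] at this
    simp only [Finsupp.mem_support_iff]
    omega
  · intro h a
    rw [chi_apply]
    by_cases ha : a ∈ t
    · have := h ha
      rw [Finsupp.mem_support_iff] at this
      simp only [if_pos ha]
      omega
    · simp [ha]

/-- total degree of an exponent vector -/
def deg (e : σ →₀ ℕ) : ℕ := e.sum fun _ c => c

lemma deg_add (e f : σ →₀ ℕ) : deg (e + f) = deg e + deg f := by
  simp [deg, Finsupp.sum_add_index']

lemma deg_single (a : σ) (n : ℕ) : deg (Finsupp.single a n) = n := by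
  simp [deg, Finsupp.sum_single_index]

lemma deg_chi (t : Finset σ) : deg (chi t) = t.card := by
  classical
  induction t using Finset.induction with
  | empty => simp [chi, deg]
  | @insert a s ha ih =>
    rw [chi_def, Finset.sum_insert ha, ← chi_def, deg_add, ih, deg_single,
      Finset.card_insert_of_notMem ha]
    omega

lemma deg_sub {t : Finset σ} {e : σ →₀ ℕ} (h : chi t ≤ e) :
    deg (e - chi t) = deg e - t.card ∧ t.card ≤ deg e := by
  have he : e - chi t + chi t = e := tsub_add_cancel_of_le h
  have := deg_add (e - chi t) (chi t)
  rw [he, deg_chi] at this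
  omega

lemma card_support_le_deg (e : σ →₀ ℕ) : e.support.card ≤ deg e := by
  classical
  calc e.support.card = ∑ a ∈ e.support, 1 := by simp
  _ ≤ ∑ a ∈ e.support, e a := by
      apply Finset.sum_le_sum
      intro a ha
      rw [Finsupp.mem_support_iff] at ha
      omega
  _ = deg e := rfl

lemma deg_toFinsupp (s : Multiset σ) : deg (Multiset.toFinsupp s) = Multiset.card s :=
  Multiset.toFinsupp_sum_eq s

lemma multiset_prod_X (s : Multiset σ) :
    (s.map (X : σ → MvPolynomial σ R)).prod = monomial s.toFinsupp 1 := by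
  induction s using Multiset.induction with
  | empty => simp [Multiset.toFinsupp_zero]
  | cons a s ih =>
    rw [Multiset.map_cons, Multiset.prod_cons, ih, X, monomial_mul, one_mul]
    have hh : (Finsupp.single a 1 : σ →₀ ℕ) + Multiset.toFinsupp s
        = Multiset.toFinsupp (a ::ₘ s) := by
      ext b
      simp only [Finsupp.add_apply, Finsupp.single_apply, Multiset.toFinsupp_apply,
        Multiset.count_cons]
      rcases eq_or_ne a b with rfl | hab
      · rw [add_comm]
      · simp [hab, hab.symm]
    rw [hh]

lemma coeff_hsymm (n : ℕ) (e : σ →₀ ℕ) :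
    coeff e (hsymm σ R n) = if deg e = n then 1 else 0 := by
  classical
  rw [hsymm]
  simp_rw [multiset_prod_X]
  rw [coeff_sum]
  simp_rw [coeff_monomial]
  by_cases h : deg e = n
  · rw [if_pos h]
    have hcard : Multiset.card (Finsupp.toMultiset e) = n := by
      rw [Finsupp.card_toMultiset]; exact h
    have h0 : ∀ μ : Sym σ n, μ ≠ (⟨Finsupp.toMultiset e, hcard⟩ : Sym σ n) →
        (if Multiset.toFinsupp μ.1 = e then (1 : R) else 0) = 0 := by
      intro μ hne
      rw [if_neg]
      intro hc
      apply hne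
      apply Subtype.ext
      rw [Multiset.toFinsupp_eq_iff] at hc
      exact hc
    rw [Fintype.sum_eq_single _ h0, if_pos]
    simp
  · rw [if_neg h]
    apply Finset.sum_eq_zero
    intro μ _
    rw [if_neg]
    intro hc
    apply h
    rw [← hc, deg_toFinsupp]
    exact μ.2

lemma coeff_esymm_mul_hsymm (k j : ℕ) (e : σ →₀ ℕ) :
    coeff e (esymm σ R k * hsymm σ R j) =
      if deg e = k + j then (e.support.card.choose k : R) else 0 := by
  classical
  rw [esymm_eq_sum_monomial, Finset.sum_mul, coeff_sum]
  simp_rw [← chi_def]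
  have step : ∀ t ∈ powersetCard k (univ : Finset σ),
      coeff e (monomial (chi t) 1 * hsymm σ R j) =
        if t ⊆ e.support ∧ deg e = k + j then 1 else 0 := by
    intro t ht
    rw [Finset.mem_powersetCard] at ht
    rw [coeff_monomial_mul']
    by_cases hle : chi t ≤ e
    · rw [if_pos hle, one_mul, coeff_hsymm]
      obtain ⟨h1, h2⟩ := deg_sub hle
      rw [h1, ht.2]
      have htsupp := chi_le_iff.mp hle
      by_cases hd : deg e = k + j
      · rw [if_pos, if_pos ⟨htsupp, hd⟩]
        rw [ht.2] at h2; omega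
      · rw [if_neg, if_neg]
        · rintro ⟨-, hh⟩; exact hd hh
        · rw [ht.2] at h2; omega
    · rw [if_neg hle, if_neg]
      rintro ⟨hsub, -⟩
      exact hle (chi_le_iff.mpr hsub)
  rw [Finset.sum_congr rfl step]
  by_cases hd : deg e = k + j
  · simp only [hd, and_true, if_pos rfl]
    rw [Finset.sum_boole]
    congr 1
    rw [← Finset.card_powersetCard]
    congr 1
    ext t
    simp only [Finset.mem_filter, Finset.mem_powersetCard, Finset.mem_univ, true_and,
      Finset.subset_univ]
    tauto
  · rw [if_neg hd]
    apply Finset.sum_eq_zero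
    intro t _
    rw [if_neg]
    rintro ⟨-, hh⟩; exact hd hh

/-- The classical identity `∑ (-1)^k e_k h_{m-k} = 0` for `m ≥ 1`. -/
lemma key (m : ℕ) (hm : m ≠ 0) :
    ∑ k ∈ range (m + 1),
      (-1 : MvPolynomial σ R) ^ k * (esymm σ R k * hsymm σ R (m - k)) = 0 := by
  classical
  apply MvPolynomial.ext
  intro e
  rw [coeff_sum, coeff_zero]
  have neg1 : ∀ k : ℕ, ((-1 : MvPolynomial σ R) ^ k) = C ((-1 : R) ^ k) := by
    intro k; rw [map_pow, map_neg, map_one]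
  simp_rw [neg1, coeff_C_mul, coeff_esymm_mul_hsymm]
  by_cases hd : deg e = m
  · have hp : e.support.card ≤ m := hd ▸ card_support_le_deg e
    have hp0 : e.support.card ≠ 0 := by
      intro h0
      rw [Finset.card_eq_zero, Finsupp.support_eq_empty] at h0
      rw [h0] at hd
      simp only [deg, Finsupp.sum_zero_index] at hd
      omega
    have h1 : ∀ k ∈ range (m + 1),
        (-1 : R) ^ k * (if deg e = k + (m - k) then (e.support.card.choose k : R) else 0)
          = (-1 : R) ^ k * (e.support.card.choose k : R) := by
      intro k hk
      rw [mem_range] at hk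
      rw [if_pos]; omega
    rw [Finset.sum_congr rfl h1]
    have h2 : ∑ k ∈ range (m + 1), (-1 : R) ^ k * (e.support.card.choose k : R)
        = ∑ k ∈ range (e.support.card + 1), (-1 : R) ^ k * (e.support.card.choose k : R) := by
      apply (Finset.sum_subset _ _).symm
      · intro x hx; rw [mem_range] at *; omega
      · intro x _ hx
        rw [mem_range, not_lt] at hx
        rw [Nat.choose_eq_zero_of_lt (by omega), Nat.cast_zero, mul_zero]
    rw [h2]
    have hz : (∑ k ∈ range (e.support.card + 1),
        ((-1 : ℤ) ^ k * (e.support.card.choose k : ℤ))) = 0 :=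
      Int.alternating_sum_range_choose_of_ne hp0
    calc (∑ k ∈ range (e.support.card + 1), (-1 : R) ^ k * (e.support.card.choose k : R))
        = ((∑ k ∈ range (e.support.card + 1),
            ((-1:ℤ) ^ k * (e.support.card.choose k : ℤ)) : ℤ) : R) := by
          simp
      _ = 0 := by rw [hz]; exact Int.cast_zero
  · apply Finset.sum_eq_zero
    intro k hk
    rw [mem_range] at hk
    rw [if_neg, mul_zero]
    omega

section E

/-- elementary symmetric polynomials in the variables other than `i` -/
noncomputable def Esub (i : σ) (k : ℕ) : MvPolynomial σ R :=
  ∑ s ∈ (univ.erase i).powersetCard k, ∏ a ∈ s, (X a : MvPolynomial σ R)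

lemma Esub_zero (i : σ) : Esub (R := R) i 0 = 1 := by simp [Esub]

lemma Esub_eq_zero (i : σ) {k : ℕ} (hk : Fintype.card σ ≤ k) : Esub (R := R) i k = 0 := by
  rw [Esub, Finset.powersetCard_eq_empty.mpr, Finset.sum_empty]
  have h1 : (univ.erase i).card < Fintype.card σ := by
    rw [← Finset.card_univ]
    exact Finset.card_erase_lt_of_mem (mem_univ i)
  omega

lemma pderiv_prod_X (i : σ) (s : Finset σ) :
    pderiv i (∏ a ∈ s, (X a : MvPolynomial σ R)) =
      if i ∈ s then ∏ a ∈ s.erase i, (X a : MvPolynomial σ R) else 0 := by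
  classical
  induction s using Finset.induction with
  | empty => simp
  | @insert a s ha ih =>
    rw [Finset.prod_insert ha, pderiv_mul, ih]
    by_cases hia : i = a
    · subst hia
      rw [pderiv_X_self, one_mul, if_neg ha, mul_zero, add_zero, if_pos (mem_insert_self i s),
        Finset.erase_insert ha]
    · rw [pderiv_X_of_ne (Ne.symm hia), zero_mul, zero_add]
      by_cases his : i ∈ s
      · rw [if_pos his, if_pos (mem_insert_of_mem his), Finset.erase_insert_of_ne (Ne.symm hia),
          Finset.prod_insert (fun h => ha (Finset.mem_of_mem_erase h))]
      · rw [if_neg his, mul_zero, if_neg]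
        intro h
        rcases Finset.mem_insert.mp h with h | h
        · exact hia h
        · exact his h

lemma univ_eq_insert (i : σ) : (univ : Finset σ) = insert i (univ.erase i) := by
  rw [Finset.insert_erase (mem_univ i)]

lemma esymm_decomp (i : σ) (k : ℕ) :
    esymm σ R (k + 1) = Esub (R := R) i (k + 1) + X i * Esub (R := R) i k := by
  classical
  rw [esymm, univ_eq_insert i,
    Finset.powersetCard_succ_insert (Finset.notMem_erase i univ),
    Finset.sum_union, Esub, Esub, Finset.sum_image]
  · congr 1
    rw [Finset.mul_sum]
    apply Finset.sum_congr rfl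
    intro t ht
    rw [Finset.mem_powersetCard] at ht
    have hit : i ∉ t := fun hh => (Finset.notMem_erase i univ) (ht.1 hh)
    rw [Finset.prod_insert hit]
  · intro a ha b hb hab
    rw [Finset.mem_coe, Finset.mem_powersetCard] at ha hb
    have hia : i ∉ a := fun hh => (Finset.notMem_erase i univ) (ha.1 hh)
    have hib : i ∉ b := fun hh => (Finset.notMem_erase i univ) (hb.1 hh)
    rw [← Finset.erase_insert hia, ← Finset.erase_insert hib, hab]
  · rw [Finset.disjoint_left]
    intro s hs hs'
    rw [Finset.mem_powersetCard] at hs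
    rw [Finset.mem_image] at hs'
    obtain ⟨t, ht, rfl⟩ := hs'
    exact (Finset.notMem_erase i univ) (hs.1 (mem_insert_self i t))

lemma pderiv_esymm (i : σ) (k : ℕ) :
    pderiv i (esymm σ R (k + 1)) = Esub (R := R) i k := by
  classical
  rw [esymm, univ_eq_insert i,
    Finset.powersetCard_succ_insert (Finset.notMem_erase i univ),
    Finset.sum_union, map_add]
  · have h1 : ∑ s ∈ (univ.erase i).powersetCard (k+1),
        pderiv i (∏ a ∈ s, (X a : MvPolynomial σ R)) = 0 := by
      apply Finset.sum_eq_zero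
      intro s hs
      rw [Finset.mem_powersetCard] at hs
      rw [pderiv_prod_X, if_neg]
      intro hh
      exact (Finset.notMem_erase i univ) (hs.1 hh)
    rw [map_sum, h1, zero_add, map_sum, Finset.sum_image]
    · rw [Esub]
      apply Finset.sum_congr rfl
      intro t ht
      rw [Finset.mem_powersetCard] at ht
      have hit : i ∉ t := fun hh => (Finset.notMem_erase i univ) (ht.1 hh)
      rw [pderiv_prod_X, if_pos (mem_insert_self i t), Finset.erase_insert hit]
    · intro a ha b hb hab
      rw [Finset.mem_coe, Finset.mem_powersetCard] at ha hb
      have hia : i ∉ a := fun hh => (Finset.notMem_erase i univ) (ha.1 hh)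
      have hib : i ∉ b := fun hh => (Finset.notMem_erase i univ) (hb.1 hh)
      rw [← Finset.erase_insert hia, ← Finset.erase_insert hib, hab]
  · rw [Finset.disjoint_left]
    intro s hs hs'
    rw [Finset.mem_powersetCard] at hs
    rw [Finset.mem_image] at hs'
    obtain ⟨t, ht, rfl⟩ := hs'
    exact (Finset.notMem_erase i univ) (hs.1 (mem_insert_self i t))

end E

lemma trim (g : ℤ → MvPolynomial σ R) (i : σ) (c : ℤ) {M : ℕ} (hM : Fintype.card σ ≤ M) :
    ∑ j ∈ range M, (-1 : MvPolynomial σ R) ^ j * (g (c - (j : ℕ)) * Esub i j)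
      = ∑ j ∈ range (Fintype.card σ),
          (-1 : MvPolynomial σ R) ^ j * (g (c - (j : ℕ)) * Esub i j) := by
  refine (Finset.sum_subset (Finset.range_subset_range.mpr hM) ?_).symm
  intro k _ hk
  rw [mem_range, not_lt] at hk
  rw [Esub_eq_zero i hk, mul_zero, mul_zero]

lemma T_eq (g : ℤ → MvPolynomial σ R) (hg1 : ∀ m : ℕ, g m = hsymm σ R m)
    (hg2 : ∀ m : ℤ, m < 0 → g m = 0) (i : σ) (n : ℕ) :
    ∑ j ∈ range (Fintype.card σ),
        (-1 : MvPolynomial σ R) ^ j * (g ((n : ℤ) - (j : ℕ)) * Esub i j)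
      = (X i : MvPolynomial σ R) ^ n := by
  have hcard : 0 < Fintype.card σ := Fintype.card_pos_iff.mpr ⟨i⟩
  induction n with
  | zero =>
    rw [Finset.sum_eq_single_of_mem 0 (mem_range.mpr hcard)]
    · have hg0 : g 0 = 1 := by
        have := hg1 0
        rw [Nat.cast_zero] at this
        rw [this, hsymm_zero]
      simp only [Nat.cast_zero, sub_zero, pow_zero, one_mul]
      rw [hg0, Esub_zero, one_mul]
    · intro k _ hk
      rw [hg2, zero_mul, mul_zero]
      have : (0 : ℕ) < k := Nat.pos_of_ne_zero hk
      push_cast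
      omega
  | succ n ih =>
    set M := Fintype.card σ + n + 1 with hMdef
    have hbig : ∑ k ∈ range M,
        (-1 : MvPolynomial σ R) ^ k * (g (((n + 1 : ℕ) : ℤ) - (k : ℕ)) * esymm σ R k) = 0 := by
      rw [← Finset.sum_subset (Finset.range_subset_range.mpr (by omega : n + 2 ≤ M))]
      · rw [← key (σ := σ) (R := R) (n + 1) (Nat.succ_ne_zero n)]
        apply Finset.sum_congr rfl
        intro k hk
        rw [mem_range] at hk
        have hcast : ((n + 1 : ℕ) : ℤ) - (k : ℕ) = ((n + 1 - k : ℕ) : ℤ) := by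
          push_cast; omega
        rw [hcast, hg1]
        ring
      · intro k _ hk
        rw [mem_range, not_lt] at hk
        rw [hg2, zero_mul, mul_zero]
        push_cast
        omega
    have hsplit : ∀ k : ℕ, esymm σ R k
        = Esub (R := R) i k + X i * (if k = 0 then 0 else Esub (R := R) i (k - 1)) := by
      intro k
      cases k with
      | zero => rw [esymm_zero, Esub_zero, if_pos rfl, mul_zero, add_zero]
      | succ k => rw [if_neg (Nat.succ_ne_zero k), Nat.succ_sub_one, esymm_decomp i k]
    have hS : (∑ k ∈ range M,
          (-1 : MvPolynomial σ R) ^ k * (g (((n + 1 : ℕ) : ℤ) - (k : ℕ)) * Esub i k))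
        + (∑ k ∈ range M, (-1 : MvPolynomial σ R) ^ k *
            (g (((n + 1 : ℕ) : ℤ) - (k : ℕ)) *
              (X i * (if k = 0 then 0 else Esub (R := R) i (k - 1))))) = 0 := by
      have hx : ∑ k ∈ range M,
          (-1 : MvPolynomial σ R) ^ k * (g (((n + 1 : ℕ) : ℤ) - (k : ℕ)) * esymm σ R k)
          = ∑ k ∈ range M,
            ((-1 : MvPolynomial σ R) ^ k * (g (((n + 1 : ℕ) : ℤ) - (k : ℕ)) * Esub i k)
              + (-1 : MvPolynomial σ R) ^ k * (g (((n + 1 : ℕ) : ℤ) - (k : ℕ)) *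
                  (X i * (if k = 0 then 0 else Esub (R := R) i (k - 1))))) := by
        apply Finset.sum_congr rfl
        intro k _
        rw [hsplit k]
        ring
      rw [← Finset.sum_add_distrib, ← hx]
      exact hbig
    rw [trim g i _ (by omega : Fintype.card σ ≤ M)] at hS
    have hS2 : (∑ k ∈ range M, (-1 : MvPolynomial σ R) ^ k *
            (g (((n + 1 : ℕ) : ℤ) - (k : ℕ)) *
              (X i * (if k = 0 then 0 else Esub (R := R) i (k - 1)))))
        = -(X i * (X i : MvPolynomial σ R) ^ n) := by
      rw [hMdef, Finset.sum_range_succ']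
      have hz : ((-1 : MvPolynomial σ R) ^ 0 *
          (g (((n + 1 : ℕ) : ℤ) - ((0 : ℕ) : ℕ)) *
            (X i * (if (0 : ℕ) = 0 then 0 else Esub (R := R) i (0 - 1))))) = 0 := by
        rw [if_pos rfl, mul_zero, mul_zero, mul_zero]
      rw [hz, add_zero]
      have hterm : ∀ k ∈ range (Fintype.card σ + n),
          ((-1 : MvPolynomial σ R) ^ (k + 1) *
            (g (((n + 1 : ℕ) : ℤ) - ((k + 1 : ℕ) : ℕ)) *
              (X i * (if (k + 1 : ℕ) = 0 then 0 else Esub (R := R) i (k + 1 - 1)))))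
          = (-(X i)) * ((-1 : MvPolynomial σ R) ^ k * (g ((n : ℤ) - (k : ℕ)) * Esub i k)) := by
        intro k _
        rw [if_neg (Nat.succ_ne_zero k), Nat.succ_sub_one]
        have hcast : ((n + 1 : ℕ) : ℤ) - ((k + 1 : ℕ) : ℕ) = (n : ℤ) - (k : ℕ) := by
          push_cast; ring
        rw [hcast, pow_succ]
        ring
      rw [Finset.sum_congr rfl hterm, ← Finset.mul_sum,
        trim g i _ (by omega : Fintype.card σ ≤ Fintype.card σ + n), ih]
      ring
    rw [hS2] at hS
    have : (X i : MvPolynomial σ R) ^ (n + 1) = X i * X i ^ n := by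
      rw [pow_succ]; ring
    rw [this]
    linear_combination hS

end Stmt4


open Stmt4 in
/-- In `Ω¹_{R/ℤ}` for `R = ℤ[x₁,…,x_N]` (`N ≥ 1`, `n ≥ 0`):
`∑ᵢ xᵢⁿ dxᵢ = ∑_{j=1}^{N} (−1)^{j−1} h_{n+1−j} · d e_j`, where `e_j` is the
`j`-th elementary symmetric polynomial and `h_m` is the complete homogeneous
symmetric polynomial of degree `m` (`h₀ = 1`, `h_m = 0` for `m < 0`).
Here `h : ℤ → R` encodes this convention. -/
theorem stmt_4 (N n : ℕ) (hN : 1 ≤ N)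
    (h : ℤ → MvPolynomial (Fin N) ℤ)
    (h_nat : ∀ m : ℕ, h m = hsymm (Fin N) ℤ m)
    (h_neg : ∀ m : ℤ, m < 0 → h m = 0) :
    ∑ i : Fin N,
        (X i : MvPolynomial (Fin N) ℤ) ^ n •
          (KaehlerDifferential.D ℤ (MvPolynomial (Fin N) ℤ)) (X i) =
      ∑ j : Fin N,
        ((-1 : MvPolynomial (Fin N) ℤ) ^ (j : ℕ) * h ((n : ℤ) - (j : ℕ))) •
          (KaehlerDifferential.D ℤ (MvPolynomial (Fin N) ℤ))
            (esymm (Fin N) ℤ ((j : ℕ) + 1)) := by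
  classical
  apply (KaehlerDifferential.mvPolynomialBasis ℤ (Fin N)).repr.injective
  refine Finsupp.ext fun i => ?_
  simp only [map_sum, LinearEquiv.map_smul, Finsupp.coe_finset_sum, Finset.sum_apply,
    Finsupp.smul_apply, KaehlerDifferential.mvPolynomialBasis_repr_apply, smul_eq_mul]
  have hL : ∑ x : Fin N, (X x : MvPolynomial (Fin N) ℤ) ^ n * pderiv i (X x)
      = (X i : MvPolynomial (Fin N) ℤ) ^ n := by
    rw [Finset.sum_eq_single i]
    · rw [pderiv_X_self, mul_one]
    · intro b _ hb
      rw [pderiv_X_of_ne hb, mul_zero]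
    · intro hi
      exact absurd (Finset.mem_univ i) hi
  rw [hL]
  simp_rw [pderiv_esymm i]
  rw [Fin.sum_univ_eq_sum_range
    (fun j => (-1 : MvPolynomial (Fin N) ℤ) ^ j * h ((n : ℤ) - (j : ℕ)) * Esub i j) N]
  have hT := T_eq h h_nat h_neg i n
  rw [Fintype.card_fin] at hT
  rw [← hT]
  apply Finset.sum_congr rfl
  intro j _
  rw [mul_assoc]
end
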